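/- Let $v_{++}, v_{+-}, v_{-+}, v_{--} \in \mathbb{C} \setminus \{0\}$ be nonzero complex numbers such that the angles between $v_{++}$ and $v_{+-}$, between $v_{++}$ and $v_{-+}$, between $v_{--}$ and $v_{+-}$, and between $v_{--}$ and $v_{-+}$ each do not exceed $\theta$ for some $0 \le \theta < \pi/2$, and let $v = v_{++} + v_{+-} + v_{-+} + v_{--}$ (so $v \ne 0$). Then $\left| \mathrm{Im} \frac{v_{++} - v_{+-} - v_{-+} + v_{--}}{v} \right| \le \tan(\theta/2)$. -/

import Mathlib

noncomputable def cangle (u v : ℂ) : ℝ :=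
  Real.arccos ((u * (starRingEnd ℂ) v).re / (‖u‖ * ‖v‖))

lemma cangle_re_ge (θ : ℝ) (hθπ : θ < Real.pi / 2) (u v : ℂ)
    (hu : u ≠ 0) (hv : v ≠ 0) (h : cangle u v ≤ θ) :
    Real.cos θ * (‖u‖ * ‖v‖) ≤ (u * (starRingEnd ℂ) v).re := by
  have hpos : 0 < ‖u‖ * ‖v‖ :=
    mul_pos (norm_pos_iff.mpr hu) (norm_pos_iff.mpr hv)
  have habs : |(u * (starRingEnd ℂ) v).re| ≤ ‖u‖ * ‖v‖ := by
    calc |(u * (starRingEnd ℂ) v).re| ≤ ‖u * (starRingEnd ℂ) v‖ :=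
          Complex.abs_re_le_norm _
      _ = ‖u‖ * ‖v‖ := by rw [norm_mul, Complex.norm_conj]
  set x := (u * (starRingEnd ℂ) v).re / (‖u‖ * ‖v‖) with hxdef
  have hx1 : -1 ≤ x := by
    rw [hxdef, le_div_iff₀ hpos]
    have := neg_abs_le ((u * (starRingEnd ℂ) v).re)
    linarith
  have hx2 : x ≤ 1 := by
    rw [hxdef, div_le_iff₀ hpos]
    have := le_abs_self ((u * (starRingEnd ℂ) v).re)
    linarith
  have hθπ' : θ ≤ Real.pi := by
    have := Real.pi_pos; linarith
  have hc : Real.cos θ ≤ x := by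
    have h2 := Real.cos_le_cos_of_nonneg_of_le_pi (Real.arccos_nonneg x) hθπ' h
    rwa [Real.cos_arccos hx1 hx2] at h2
  calc Real.cos θ * (‖u‖ * ‖v‖)
      ≤ x * (‖u‖ * ‖v‖) := by
        exact mul_le_mul_of_nonneg_right hc hpos.le
    _ = (u * (starRingEnd ℂ) v).re := by rw [hxdef]; exact div_mul_cancel₀ _ hpos.ne'

lemma im_le_tan_mul_re (θ : ℝ) (hθ0 : 0 ≤ θ) (hθπ : θ < Real.pi / 2) (w : ℂ)
    (h : Real.cos θ * ‖w‖ ≤ w.re) :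
    |w.im| ≤ Real.tan θ * w.re := by
  have hcos : 0 < Real.cos θ := Real.cos_pos_of_mem_Ioo ⟨by linarith [Real.pi_pos], hθπ⟩
  have hsin : 0 ≤ Real.sin θ := Real.sin_nonneg_of_nonneg_of_le_pi hθ0 (by linarith [Real.pi_pos])
  have hsc : Real.sin θ ^ 2 + Real.cos θ ^ 2 = 1 := Real.sin_sq_add_cos_sq θ
  have habs : ‖w‖ ^ 2 = w.re ^ 2 + w.im ^ 2 := by
    rw [Complex.sq_norm, Complex.normSq_apply]; ring
  have habs0 : 0 ≤ ‖w‖ := norm_nonneg w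
  have hre : 0 ≤ w.re := le_trans (by positivity) h
  rw [Real.tan_eq_sin_div_cos]
  rw [div_mul_eq_mul_div, le_div_iff₀ hcos]
  -- |w.im| * cos θ ≤ sin θ * w.re
  have key : (|w.im| * Real.cos θ) ^ 2 ≤ (Real.sin θ * w.re) ^ 2 := by
    have h2 : (Real.cos θ * ‖w‖) ^ 2 ≤ w.re ^ 2 := by
      have := mul_le_mul_of_nonneg_left h (by positivity : (0:ℝ) ≤ Real.cos θ * ‖w‖)
      nlinarith
    have him : |w.im| ^ 2 = w.im ^ 2 := sq_abs _
    nlinarith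
  have h1 : 0 ≤ Real.sin θ * w.re := mul_nonneg hsin hre
  nlinarith [abs_nonneg w.im, mul_nonneg (abs_nonneg w.im) hcos.le]

set_option maxHeartbeats 1000000 in
theorem stmt3 (θ : ℝ) (hθ0 : 0 ≤ θ) (hθπ : θ < Real.pi / 2)
    (vpp vpm vmp vmm : ℂ)
    (h1 : vpp ≠ 0) (h2 : vpm ≠ 0) (h3 : vmp ≠ 0) (h4 : vmm ≠ 0)
    (a1 : cangle vpp vpm ≤ θ) (a2 : cangle vpp vmp ≤ θ)
    (a3 : cangle vmm vpm ≤ θ) (a4 : cangle vmm vmp ≤ θ) :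
    |((vpp - vpm - vmp + vmm) / (vpp + vpm + vmp + vmm)).im| ≤ Real.tan (θ / 2) := by
  have hcos : 0 < Real.cos θ := Real.cos_pos_of_mem_Ioo ⟨by linarith [Real.pi_pos], hθπ⟩
  set p := vpp + vmm with hp
  set q := vpm + vmp with hq
  set w1 := vpp * (starRingEnd ℂ) vpm with hw1
  set w2 := vpp * (starRingEnd ℂ) vmp with hw2
  set w3 := vmm * (starRingEnd ℂ) vpm with hw3
  set w4 := vmm * (starRingEnd ℂ) vmp with hw4
  have hre1 := cangle_re_ge θ hθπ vpp vpm h1 h2 a1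
  have hre2 := cangle_re_ge θ hθπ vpp vmp h1 h3 a2
  have hre3 := cangle_re_ge θ hθπ vmm vpm h4 h2 a3
  have hre4 := cangle_re_ge θ hθπ vmm vmp h4 h3 a4
  have him1 := im_le_tan_mul_re θ hθ0 hθπ w1 (by rw [hw1, norm_mul, Complex.norm_conj]; exact hre1)
  have him2 := im_le_tan_mul_re θ hθ0 hθπ w2 (by rw [hw2, norm_mul, Complex.norm_conj]; exact hre2)
  have him3 := im_le_tan_mul_re θ hθ0 hθπ w3 (by rw [hw3, norm_mul, Complex.norm_conj]; exact hre3)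
  have him4 := im_le_tan_mul_re θ hθ0 hθπ w4 (by rw [hw4, norm_mul, Complex.norm_conj]; exact hre4)
  have hre1' : 0 < w1.re :=
    lt_of_lt_of_le (mul_pos hcos (mul_pos (norm_pos_iff.mpr h1) (norm_pos_iff.mpr h2))) hre1
  have hre2' : 0 < w2.re :=
    lt_of_lt_of_le (mul_pos hcos (mul_pos (norm_pos_iff.mpr h1) (norm_pos_iff.mpr h3))) hre2
  have hre3' : 0 < w3.re :=
    lt_of_lt_of_le (mul_pos hcos (mul_pos (norm_pos_iff.mpr h4) (norm_pos_iff.mpr h2))) hre3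
  have hre4' : 0 < w4.re :=
    lt_of_lt_of_le (mul_pos hcos (mul_pos (norm_pos_iff.mpr h4) (norm_pos_iff.mpr h3))) hre4
  set P := p * (starRingEnd ℂ) q with hP
  have hPeq : P = w1 + w2 + w3 + w4 := by
    rw [hP, hp, hq, hw1, hw2, hw3, hw4, map_add]; ring
  have hv1 : vpp - vpm - vmp + vmm = p - q := by rw [hp, hq]; ring
  have hv2 : vpp + vpm + vmp + vmm = p + q := by rw [hp, hq]; ring
  have hPnsq : Complex.normSq P = Complex.normSq p * Complex.normSq q := by
    rw [hP, Complex.normSq_mul, Complex.normSq_conj]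
  have hPim : P.im = p.im * q.re - p.re * q.im := by
    rw [hP]
    simp only [Complex.mul_im, Complex.conj_re, Complex.conj_im]
    ring
  clear_value p q w1 w2 w3 w4 P
  clear hre1 hre2 hre3 hre4 hp hq hw1 hw2 hw3 hw4
  obtain ⟨R, hR⟩ : ∃ x, P.re = x := ⟨_, rfl⟩
  obtain ⟨I, hI⟩ : ∃ x, |P.im| = x := ⟨_, rfl⟩
  have hRpos : 0 < R := by
    rw [← hR, hPeq]
    simp only [Complex.add_re]
    linarith
  have hIle : I ≤ Real.tan θ * R := by
    rw [← hI, ← hR, hPeq]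
    simp only [Complex.add_im, Complex.add_re]
    calc |w1.im + w2.im + w3.im + w4.im|
        ≤ |w1.im| + |w2.im| + |w3.im| + |w4.im| := by
          have := abs_add_le (w1.im + w2.im + w3.im) w4.im
          have := abs_add_le (w1.im + w2.im) w3.im
          have := abs_add_le w1.im w2.im
          linarith
      _ ≤ Real.tan θ * (w1.re + w2.re + w3.re + w4.re) := by
          rw [mul_add, mul_add, mul_add]; linarith
  obtain ⟨t, ht⟩ : ∃ x, Real.tan (θ / 2) = x := ⟨_, rfl⟩
  have ht0 : 0 ≤ t := by
    rw [← ht]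
    exact Real.tan_nonneg_of_nonneg_of_le_pi_div_two (by linarith) (by linarith)
  have ht1 : t < 1 := by
    rw [← ht, ← Real.tan_pi_div_four]
    rcases eq_or_lt_of_le hθ0 with h | h
    · rw [← h]; simp [Real.pi_pos]
    · exact Real.tan_lt_tan_of_nonneg_of_lt_pi_div_two (by linarith)
        (by linarith [Real.pi_pos]) (by linarith)
  have ht2 : 0 < 1 - t ^ 2 := by nlinarith
  have htan : Real.tan θ = 2 * t / (1 - t ^ 2) := by
    rw [← ht, ← Real.tan_two_mul]; ring_nf
  have hIR : (1 - t ^ 2) * I ≤ 2 * t * R := by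
    have h5 := mul_le_mul_of_nonneg_left hIle ht2.le
    rw [htan] at h5
    calc (1 - t ^ 2) * I ≤ (1 - t ^ 2) * (2 * t / (1 - t ^ 2) * R) := h5
      _ = 2 * t * R := by field_simp
  obtain ⟨np, hnp⟩ : ∃ x, Complex.normSq p = x := ⟨_, rfl⟩
  obtain ⟨nq, hnq⟩ : ∃ x, Complex.normSq q = x := ⟨_, rfl⟩
  have hnp0 : 0 ≤ np := by rw [← hnp]; exact Complex.normSq_nonneg p
  have hnq0 : 0 ≤ nq := by rw [← hnq]; exact Complex.normSq_nonneg q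
  have hPsq : R ^ 2 + I ^ 2 = np * nq := by
    rw [← hnp, ← hnq, ← hPnsq, Complex.normSq_apply, ← hR, ← hI, sq_abs]
    ring
  obtain ⟨s, hs⟩ : ∃ x, Real.sqrt (np * nq) = x := ⟨_, rfl⟩
  have hs0 : 0 ≤ s := by rw [← hs]; exact Real.sqrt_nonneg _
  have hs2 : s ^ 2 = R ^ 2 + I ^ 2 := by
    rw [← hs, Real.sq_sqrt (mul_nonneg hnp0 hnq0), hPsq]
  have hAM : 2 * s ≤ np + nq := by
    have hh1 : np * nq ≤ ((np + nq) / 2) ^ 2 := by nlinarith [sq_nonneg (np - nq)]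
    have hh2 : s ≤ (np + nq) / 2 := by
      rw [← hs]
      calc Real.sqrt (np * nq) ≤ Real.sqrt (((np + nq) / 2) ^ 2) := Real.sqrt_le_sqrt hh1
        _ = (np + nq) / 2 := Real.sqrt_sq (by positivity)
    linarith
  have hI0 : 0 ≤ I := by rw [← hI]; exact abs_nonneg _
  clear him1 him2 him3 him4 hre1' hre2' hre3' hre4' hPeq hIle htan hcos
  clear a1 a2 a3 a4 h1 h2 h3 h4
  have hG : I ≤ t * s + t * R := by
    rcases le_or_gt I (t * R) with hc | hc
    · nlinarith
    · have hsq : (I - t * R) ^ 2 ≤ (t * s) ^ 2 := by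
        have := mul_le_mul_of_nonneg_right hIR hI0
        nlinarith
      nlinarith [mul_nonneg ht0 hs0]
  have hfinal : 2 * I ≤ t * (np + nq + 2 * R) := by
    have := mul_le_mul_of_nonneg_left hAM ht0
    nlinarith
  -- now compute the goal
  have hN : Complex.normSq (p + q) = np + nq + 2 * R := by
    rw [Complex.normSq_add, ← hP, hnp, hnq, hR]
  have hNpos : 0 < Complex.normSq (p + q) := by
    rw [hN]; linarith
  rw [hv1, hv2, Complex.div_im]
  have hnum : (p - q).im * (p + q).re / Complex.normSq (p + q)
      - (p - q).re * (p + q).im / Complex.normSq (p + q)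
      = 2 * P.im / Complex.normSq (p + q) := by
    rw [div_sub_div_same]
    congr 1
    simp only [Complex.sub_im, Complex.sub_re, Complex.add_im, Complex.add_re]
    rw [hPim]; ring
  rw [hnum, abs_div, abs_of_pos hNpos, div_le_iff₀ hNpos, hN, ht]
  have h2I : |2 * P.im| = 2 * I := by rw [abs_mul, hI]; norm_num
  rw [h2I]
  linarith
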